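/- Let P be a property of topological spaces that is invariant under homeomorphisms, is inherited by closed subspaces, and is preserved by finite powers (if a space satisfies P then so does each of its finite topological powers). Then for all topological spaces X and Y such that the disjoint union X ⊔ Y satisfies P, the product space X × Y satisfies P. Moreover, if in addition P is preserved by finite unions (whenever a space is the union of finitely many subspaces each satisfying P, the space satisfies P), then P is preserved by finite products: if X and Y satisfy P then so does X × Y. -/

import Mathlib

open Set

universe u

/-- Let `P` be a property of topological spaces, invariant under homeomorphism, inherited by
closed subspaces, and preserved by finite powers. Then whenever the disjoint union `X ⊕ Y`
satisfies `P`, so does the product `X × Y`. Moreover, if `P` is also preserved by finite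
unions, then `P` is preserved by finite products. -/
theorem stmt8 (P : ∀ (Z : Type u) [TopologicalSpace Z], Prop)
    (hhomeo : ∀ (Z₁ Z₂ : Type u) [TopologicalSpace Z₁] [TopologicalSpace Z₂],
      Nonempty (Z₁ ≃ₜ Z₂) → P Z₁ → P Z₂)
    (hclosed : ∀ (Z : Type u) [TopologicalSpace Z] (C : Set Z), IsClosed C → P Z → P ↥C)
    (hpow : ∀ (Z : Type u) [TopologicalSpace Z] (n : ℕ), P Z → P (Fin n → Z)) :
    (∀ (X Y : Type u) [TopologicalSpace X] [TopologicalSpace Y],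
      P (X ⊕ Y) → P (X × Y)) ∧
    ((∀ (Z : Type u) [TopologicalSpace Z] (n : ℕ) (A : Fin n → Set Z),
        (⋃ i, A i) = Set.univ → (∀ i, P ↥(A i)) → P Z) →
      ∀ (X Y : Type u) [TopologicalSpace X] [TopologicalSpace Y],
        P X → P Y → P (X × Y)) := by
  have main : ∀ (X Y : Type u) [TopologicalSpace X] [TopologicalSpace Y],
      P (X ⊕ Y) → P (X × Y) := by
    intro X Y _ _ h
    have h2 : P (Fin 2 → (X ⊕ Y)) := hpow _ 2 h
    have hsq : P ((X ⊕ Y) × (X ⊕ Y)) :=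
      hhomeo _ _ ⟨Homeomorph.piFinTwo fun _ => X ⊕ Y⟩ h2
    have hCcl : IsClosed ((Set.range (Sum.inl : X → X ⊕ Y)) ×ˢ
        (Set.range (Sum.inr : Y → X ⊕ Y))) :=
      isClosed_range_inl.prod isClosed_range_inr
    have hC : P ↥((Set.range (Sum.inl : X → X ⊕ Y)) ×ˢ
        (Set.range (Sum.inr : Y → X ⊕ Y))) := hclosed _ _ hCcl hsq
    refine hhomeo _ _ ⟨?_⟩ hC
    exact (Homeomorph.Set.prod _ _).trans
      (((Topology.IsEmbedding.toHomeomorph Topology.IsEmbedding.inl).symm).prodCongr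
        ((Topology.IsEmbedding.toHomeomorph Topology.IsEmbedding.inr).symm))
  refine ⟨main, ?_⟩
  intro hunion X Y _ _ hX hY
  apply main
  refine hunion _ 2 ![Set.range Sum.inl, Set.range Sum.inr] ?_ ?_
  · ext z
    simp only [Set.mem_iUnion, Set.mem_univ, iff_true]
    cases z with
    | inl x => exact ⟨0, x, rfl⟩
    | inr y => exact ⟨1, y, rfl⟩
  · intro i
    fin_cases i
    · exact hhomeo _ _ ⟨Topology.IsEmbedding.toHomeomorph Topology.IsEmbedding.inl⟩ hX
    · exact hhomeo _ _ ⟨Topology.IsEmbedding.toHomeomorph Topology.IsEmbedding.inr⟩ hY
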